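/- For every n ≥ 1, the number of 210-avoiding primitive ascent sequences of length n+1 equals the number of sequences (a_1, …, a_n) of positive integers with 1 ≤ a_i ≤ i for all i and with no indices i < j < k such that a_i ≥ a_j ≥ a_k. -/

import Mathlib

/-- `asc x m` is the number of ascents in the sequence `x 1, x 2, …, x m`. -/
def asc (x : ℕ → ℕ) (m : ℕ) : ℕ :=
  ((Finset.Ico 1 m).filter (fun i => x i < x (i + 1))).card

/-- `x 1, …, x m` is an ascent sequence. -/
def AscentSeq (x : ℕ → ℕ) (m : ℕ) : Prop :=
  x 1 = 0 ∧ ∀ i, 2 ≤ i → i ≤ m → x i ≤ asc x (i - 1) + 1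

/-- `x 1, …, x m` avoids the pattern 210. -/
def Avoids210 (x : ℕ → ℕ) (m : ℕ) : Prop :=
  ¬ ∃ i j k, 1 ≤ i ∧ i < j ∧ j < k ∧ k ≤ m ∧ x j < x i ∧ x k < x j

/-- `x 1, …, x m` is primitive: no two consecutive equal entries. -/
def Primitive (x : ℕ → ℕ) (m : ℕ) : Prop :=
  ∀ i, 1 ≤ i → i < m → x i ≠ x (i + 1)

/-! ### Auxiliary definitions -/

/-- number of descents among steps `1, …, i` (step `t` compares `x t` and `x (t+1)`). -/
def des (x : ℕ → ℕ) (i : ℕ) : ℕ :=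
  ((Finset.Ico 1 (i+1)).filter (fun t => x (t+1) < x t)).card

/-- number of weak descents of `a` among positions `1, …, i-1`. -/
def wdes (a : ℕ → ℕ) (i : ℕ) : ℕ :=
  ((Finset.Ico 1 i).filter (fun t => a (t+1) ≤ a t)).card

/-- the bijection -/
def phiMap (n : ℕ) (x : ℕ → ℕ) : ℕ → ℕ :=
  fun i => if 1 ≤ i ∧ i ≤ n then x (i+1) + des x i else 0

/-- its inverse -/
def psiMap (n : ℕ) (a : ℕ → ℕ) : ℕ → ℕ :=
  fun j => if 2 ≤ j ∧ j ≤ n+1 then a (j-1) - wdes a (j-1) else 0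

lemma des_mono (x : ℕ → ℕ) {i j : ℕ} (h : i ≤ j) : des x i ≤ des x j :=
  Finset.card_le_card (Finset.filter_subset_filter _ (Finset.Ico_subset_Ico le_rfl (by omega)))

lemma asc_mono (x : ℕ → ℕ) {i j : ℕ} (h : i ≤ j) : asc x i ≤ asc x j :=
  Finset.card_le_card (Finset.filter_subset_filter _ (Finset.Ico_subset_Ico le_rfl h))

lemma des_succ (x : ℕ → ℕ) (i : ℕ) :
    des x (i+1) = des x i + if x (i+2) < x (i+1) then 1 else 0 := by
  unfold des
  rw [Nat.Ico_succ_right_eq_insert_Ico (by omega), Finset.filter_insert]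
  split
  · rw [Finset.card_insert_of_notMem (by simp)]
  · omega

lemma asc_succ (x : ℕ → ℕ) {m : ℕ} (h : 1 ≤ m) :
    asc x (m+1) = asc x m + if x m < x (m+1) then 1 else 0 := by
  unfold asc
  rw [Nat.Ico_succ_right_eq_insert_Ico h, Finset.filter_insert]
  split
  · rw [Finset.card_insert_of_notMem (by simp)]
  · omega

lemma wdes_succ (a : ℕ → ℕ) {i : ℕ} (h : 1 ≤ i) :
    wdes a (i+1) = wdes a i + if a (i+1) ≤ a i then 1 else 0 := by
  unfold wdes
  rw [Nat.Ico_succ_right_eq_insert_Ico h, Finset.filter_insert]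
  split
  · rw [Finset.card_insert_of_notMem (by simp)]
  · omega

lemma des_zero (x : ℕ → ℕ) : des x 0 = 0 := by simp [des]

lemma wdes_zero (a : ℕ → ℕ) : wdes a 0 = 0 := by simp [wdes]

lemma wdes_one (a : ℕ → ℕ) : wdes a 1 = 0 := by simp [wdes]

lemma des_interval (x : ℕ → ℕ) {i j : ℕ} (h : i ≤ j) :
    des x j = des x i + ((Finset.Ico (i+1) (j+1)).filter (fun t => x (t+1) < x t)).card := by
  unfold des
  rw [← Finset.card_union_of_disjoint, ← Finset.filter_union,
    Finset.Ico_union_Ico_eq_Ico (by omega) (by omega)]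
  exact Finset.disjoint_filter_filter (Finset.Ico_disjoint_Ico_consecutive 1 (i+1) (j+1))

lemma not_descent_of_des_eq (x : ℕ → ℕ) {i j t : ℕ} (hij : i ≤ j) (he : des x i = des x j)
    (h1 : i < t) (h2 : t ≤ j) : ¬ x (t+1) < x t := by
  intro hd
  have h3 := des_interval x hij
  have h5 : 0 < ((Finset.Ico (i+1) (j+1)).filter (fun t => x (t+1) < x t)).card :=
    Finset.card_pos.mpr ⟨t, by simp [Finset.mem_Ico]; omega⟩
  omega

section XSide
variable {n : ℕ} {x : ℕ → ℕ}

lemma asc_add_des (hprim : Primitive x (n+1)) {i : ℕ} (hi : i ≤ n) :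
    asc x (i+1) + des x i = i := by
  classical
  have h1 : ((Finset.Ico 1 (i+1)).filter (fun t => ¬ x t < x (t+1))).card = des x i := by
    unfold des
    congr 1
    apply Finset.filter_congr
    intro t ht
    simp only [Finset.mem_Ico] at ht
    have := hprim t (by omega) (by omega)
    omega
  have h2 := Finset.card_filter_add_card_filter_not
    (s := Finset.Ico 1 (i+1)) (p := fun t => x t < x (t+1))
  rw [Nat.card_Ico] at h2
  unfold asc
  omega

lemma x_le_asc (hx : AscentSeq x (n+1)) (hprim : Primitive x (n+1)) {i : ℕ}
    (h1 : 1 ≤ i) (h2 : i ≤ n) : x (i+1) ≤ asc x (i+1) := by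
  rcases Nat.lt_or_ge (x i) (x (i+1)) with hA | hD
  · have hb := hx.2 (i+1) (by omega) (by omega)
    simp only [Nat.add_sub_cancel] at hb
    rw [asc_succ x h1]
    simp only [if_pos hA]
    omega
  · have hne := hprim i h1 (by omega)
    have hD' : x (i+1) < x i := by omega
    rcases Nat.eq_or_lt_of_le h1 with h | h
    · exfalso; rw [← h] at hD'; rw [hx.1] at hD'; omega
    · have hb := hx.2 i (by omega) (by omega)
      have hm : asc x (i-1) ≤ asc x (i+1) := asc_mono x (by omega)
      omega

lemma one_le_phi (hprim : Primitive x (n+1)) {i : ℕ}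
    (h1 : 1 ≤ i) (h2 : i ≤ n) : 1 ≤ x (i+1) + des x i := by
  rcases Nat.lt_or_ge (x i) (x (i+1)) with hA | hD
  · omega
  · have hne := hprim i h1 (by omega)
    have : 1 ≤ des x i := Finset.card_pos.mpr ⟨i, by simp [Finset.mem_Ico]; omega⟩
    omega

/-- order reversal: if `x (i+1) ≤ x (j+1)` then `a i < a j`. -/
lemma phi_lt (hprim : Primitive x (n+1)) {i j : ℕ} (h1 : 1 ≤ i) (hij : i < j) (hj : j ≤ n)
    (hle : x (i+1) ≤ x (j+1)) : x (i+1) + des x i < x (j+1) + des x j := by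
  have hm : des x i ≤ des x j := des_mono x (by omega)
  rcases Nat.eq_or_lt_of_le hm with he | h
  · have key : ∀ t, i < t → t ≤ j → x (i+1) < x (t+1) := by
      intro t
      induction t with
      | zero => omega
      | succ s ih =>
        intro hs1 hs2
        rcases Nat.eq_or_lt_of_le hs1 with h' | h'
        · have hnd := not_descent_of_des_eq x (le_of_lt hij) he hs1 hs2
          have hne := hprim (s+1) (by omega) (by omega)
          have : i = s := by omega
          subst this
          omega
        · have hprev := ih (by omega) (by omega)
          have hnd := not_descent_of_des_eq x (le_of_lt hij) he hs1 hs2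
          have hne := hprim (s+1) (by omega) (by omega)
          omega
    have := key j hij le_rfl
    omega
  · omega

/-- the hard direction: a strict 210 pattern in `x` forces a weak 210 pattern in `φ x`. -/
lemma hard210 (h : ∃ p q r, 1 ≤ p ∧ p < q ∧ q < r ∧ r ≤ n ∧
      x (q+1) < x (p+1) ∧ x (r+1) < x (q+1)) :
    ∃ i j k, 1 ≤ i ∧ i < j ∧ j < k ∧ k ≤ n ∧
      x (j+1) + des x j ≤ x (i+1) + des x i ∧
      x (k+1) + des x k ≤ x (j+1) + des x j := by
  classical
  have hex : ∃ r', ∃ i j, 1 ≤ i ∧ i < j ∧ j < r' ∧ r' ≤ n ∧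
      x (j+1) < x (i+1) ∧ x (r'+1) < x (j+1) := by
    obtain ⟨p, q, r, h1, h2, h3, h4, h5, h6⟩ := h
    exact ⟨r, p, q, h1, h2, h3, h4, h5, h6⟩
  set r0 := Nat.find hex with hr0def
  have hr0min : ∀ m, m < r0 → ¬ ∃ i j, 1 ≤ i ∧ i < j ∧ j < m ∧ m ≤ n ∧
      x (j+1) < x (i+1) ∧ x (m+1) < x (j+1) := fun m hm => Nat.find_min hex hm
  obtain ⟨p1, q1, hp1, hpq1, hq1r, hr0n, hd1, hd2⟩ := Nat.find_spec hex
  have hexq : x (r0+1) < x (q1+1) ∧ ∃ i, 1 ≤ i ∧ i < q1 ∧ x (q1+1) < x (i+1) :=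
    ⟨hd2, p1, hp1, hpq1, hd1⟩
  set Q : ℕ → Prop := fun q' => x (r0+1) < x (q'+1) ∧ ∃ i, 1 ≤ i ∧ i < q' ∧ x (q'+1) < x (i+1)
    with hQ
  have hq1le : q1 ≤ r0 - 1 := by omega
  set q0 := Nat.findGreatest Q (r0 - 1) with hq0def
  have hQq0 : Q q0 := Nat.findGreatest_spec hq1le hexq
  have hq0ge : q1 ≤ q0 := Nat.le_findGreatest hq1le hexq
  have hq0lt : q0 < r0 := by
    have := Nat.findGreatest_le (P := Q) (r0 - 1)
    omega
  have hq0max : ∀ t, q0 < t → t ≤ r0 - 1 →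
      ¬ (x (r0+1) < x (t+1) ∧ ∃ i, 1 ≤ i ∧ i < t ∧ x (t+1) < x (i+1)) :=
    fun t h1 h2 => Nat.findGreatest_is_greatest h1 h2
  obtain ⟨hq0r, i1, hi1, hi1q, hi1d⟩ := hQq0
  set R : ℕ → Prop := fun p' => 1 ≤ p' ∧ x (q0+1) < x (p'+1) with hR
  have hexr : (1:ℕ) ≤ i1 ∧ x (q0+1) < x (i1+1) := ⟨hi1, hi1d⟩
  have hi1le : i1 ≤ q0 - 1 := by omega
  set p0 := Nat.findGreatest R (q0 - 1) with hp0def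
  have hRp0 : R p0 := Nat.findGreatest_spec hi1le hexr
  have hp0lt : p0 < q0 := by
    have := Nat.findGreatest_le (P := R) (q0 - 1)
    omega
  have hp0max : ∀ t, p0 < t → t ≤ q0 - 1 → ¬ ((1:ℕ) ≤ t ∧ x (q0+1) < x (t+1)) :=
    fun t h1 h2 => Nat.findGreatest_is_greatest h1 h2
  obtain ⟨hp0one, hp0d⟩ := hRp0
  have C1 : ∀ t, q0 < t → t < r0 → x (q0+1) < x (t+1) := by
    intro t ht1 ht2
    by_contra hcon
    push_neg at hcon
    rcases Nat.eq_or_lt_of_le hcon with heq | hlt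
    · exact hq0max t ht1 (by omega)
        ⟨by omega, p0, hp0one, by omega, by omega⟩
    · exact hr0min t ht2 ⟨p0, q0, hp0one, hp0lt, ht1, by omega, hp0d, hlt⟩
  have C2 : des x r0 = des x q0 + 1 := by
    have hset : ((Finset.Ico (q0+1) (r0+1)).filter (fun t => x (t+1) < x t)) = {r0} := by
      ext t
      simp only [Finset.mem_filter, Finset.mem_Ico, Finset.mem_singleton]
      constructor
      · rintro ⟨⟨ht1, ht2⟩, hdes⟩
        by_contra hne
        have htr : t < r0 := by omega
        have hgt : x (q0+1) < x (t+1) := C1 t (by omega) htr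
        have hgt' : x (q0+1) ≤ x t := by
          rcases Nat.eq_or_lt_of_le ht1 with h' | h'
          · rw [← h']
          · have h3 := C1 (t-1) (by omega) (by omega)
            have h'' : t - 1 + 1 = t := by omega
            rw [h''] at h3
            omega
        refine hq0max t (by omega) (by omega) ⟨by omega, t-1, by omega, by omega, ?_⟩
        have h'' : t - 1 + 1 = t := by omega
        rw [h'']
        omega
      · intro ht
        subst ht
        refine ⟨⟨by omega, by omega⟩, ?_⟩
        rcases Nat.eq_or_lt_of_le (by omega : q0 + 1 ≤ r0) with h' | h'
        · rw [← h'] at hq0r ⊢; exact hq0r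
        · have h3 := C1 (r0-1) (by omega) (by omega)
          have h'' : r0 - 1 + 1 = r0 := by omega
          rw [h''] at h3
          omega
    rw [des_interval x (le_of_lt hq0lt), hset]
    simp
  have C3 : des x q0 ≤ des x p0 + 1 := by
    have hsub : ((Finset.Ico (p0+1) (q0+1)).filter (fun t => x (t+1) < x t)) ⊆ {p0+1} := by
      intro t ht
      simp only [Finset.mem_filter, Finset.mem_Ico] at ht
      obtain ⟨⟨ht1, ht2⟩, hdes⟩ := ht
      simp only [Finset.mem_singleton]
      by_contra hne
      have h'' : t - 1 + 1 = t := by omega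
      have hxt : x t ≤ x (q0+1) := by
        by_contra hcon
        push_neg at hcon
        refine hp0max (t-1) (by omega) (by omega) ⟨by omega, ?_⟩
        rw [h'']
        omega
      refine hr0min t (by omega)
        ⟨p0, t-1, hp0one, by omega, by omega, by omega, ?_, ?_⟩ <;> rw [h''] <;> omega
    have hcard : ((Finset.Ico (p0+1) (q0+1)).filter (fun t => x (t+1) < x t)).card ≤ 1 := by
      have := Finset.card_le_card hsub
      simpa using this
    have := des_interval x (le_of_lt hp0lt)
    omega
  exact ⟨p0, q0, r0, hp0one, hp0lt, hq0lt, hr0n, by omega, by omega⟩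

/-- descents of `x` translate to weak descents of `φ x` (given ranges). -/
lemma phi_step_iff (hprim : Primitive x (n+1)) {t : ℕ} (h1 : 1 ≤ t) (h2 : t + 1 ≤ n) :
    (phiMap n x (t+1) ≤ phiMap n x t ↔ x (t+2) < x (t+1)) := by
  have e1 : phiMap n x t = x (t+1) + des x t := by
    unfold phiMap; rw [if_pos ⟨h1, by omega⟩]
  have e2 : phiMap n x (t+1) = x (t+2) + des x (t+1) := by
    unfold phiMap; rw [if_pos ⟨by omega, h2⟩]
  constructor
  · intro hle
    by_contra hcon
    push_neg at hcon
    have := phi_lt hprim h1 (by omega) h2 hcon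
    have hxx : x (t+1+1) = x (t+2) := rfl
    omega
  · intro hd
    have := des_succ x t
    rw [if_pos hd] at this
    have hxx : x (t+1+1) = x (t+2) := rfl
    omega

lemma wdes_phi (hx : AscentSeq x (n+1)) (hprim : Primitive x (n+1)) :
    ∀ i, i ≤ n → wdes (phiMap n x) i = des x i := by
  intro i
  induction i with
  | zero => intro _; rw [wdes_zero, des_zero]
  | succ m ih =>
    intro hm
    rcases Nat.eq_zero_or_pos m with h0 | h0
    · subst h0
      rw [wdes_one]
      have : ¬ x 2 < x 1 := by rw [hx.1]; omega
      rw [des_succ x 0]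
      simp only [Nat.zero_add] at *
      rw [des_zero, if_neg this]
    · rw [wdes_succ _ h0, des_succ x m, ih (by omega)]
      have hiff := phi_step_iff hprim h0 hm
      by_cases hd : x (m+2) < x (m+1)
      · rw [if_pos hd, if_pos (hiff.mpr hd)]
      · rw [if_neg hd, if_neg (fun hc => hd (hiff.mp hc))]

lemma psi_phi (hx : AscentSeq x (n+1)) (hprim : Primitive x (n+1))
    (hsupp : ∀ i, i = 0 ∨ n + 1 < i → x i = 0) :
    psiMap n (phiMap n x) = x := by
  funext j
  unfold psiMap
  by_cases hj : 2 ≤ j ∧ j ≤ n + 1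
  · rw [if_pos hj]
    obtain ⟨hj1, hj2⟩ := hj
    have hrange : 1 ≤ j - 1 ∧ j - 1 ≤ n := by omega
    have e1 : phiMap n x (j-1) = x j + des x (j-1) := by
      unfold phiMap
      rw [if_pos ⟨hrange.1, hrange.2⟩]
      have : j - 1 + 1 = j := by omega
      rw [this]
    rw [wdes_phi hx hprim (j-1) hrange.2, e1]
    omega
  · rw [if_neg hj]
    rcases Nat.lt_or_ge j 2 with h | h
    · interval_cases j
      · exact (hsupp 0 (Or.inl rfl)).symm
      · exact hx.1.symm
    · exact (hsupp j (Or.inr (by omega))).symm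

end XSide

section ASide
variable {n : ℕ} {a : ℕ → ℕ}

lemma wdes_le (hb : ∀ i, 1 ≤ i → i ≤ n → 1 ≤ a i ∧ a i ≤ i)
    (hav : ¬ ∃ i j k, 1 ≤ i ∧ i < j ∧ j < k ∧ k ≤ n ∧ a j ≤ a i ∧ a k ≤ a j)
    {i : ℕ} (h2 : i ≤ n) : wdes a i ≤ a i := by
  classical
  have := Finset.card_le_card_of_injOn
    (s := (Finset.Ico 1 i).filter (fun t => a (t+1) ≤ a t))
    (t := Finset.Icc 1 (a i)) (fun t => a (t+1)) ?_ ?_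
  · unfold wdes
    simpa using this
  · intro t ht
    simp only [Finset.coe_filter, Finset.mem_Ico, Set.mem_setOf_eq, Finset.mem_filter] at ht
    obtain ⟨⟨ht1, ht2⟩, htd⟩ := ht
    simp only [Finset.mem_coe, Finset.mem_Icc]
    constructor
    · exact (hb (t+1) (by omega) (by omega)).1
    · rcases Nat.eq_or_lt_of_le (by omega : t + 1 ≤ i) with h' | h'
      · rw [h']
      · by_contra hcon
        exact hav ⟨t, t+1, i, ht1, by omega, h', h2, htd, by omega⟩
  · intro t1 ht1 t2 ht2 heq
    simp only [Finset.coe_filter, Finset.mem_Ico, Set.mem_setOf_eq] at ht1 ht2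
    have heq' : a (t1+1) = a (t2+1) := heq
    by_contra hne
    rcases Nat.lt_or_ge t1 t2 with hlt | hge
    · exact hav ⟨t1, t1+1, t2+1, ht1.1.1, by omega, by omega, by omega, ht1.2, by omega⟩
    · have hlt : t2 < t1 := by omega
      exact hav ⟨t2, t2+1, t1+1, ht2.1.1, by omega, by omega, by omega, ht2.2, by omega⟩

end ASide

section PsiSide
variable {n : ℕ} {a : ℕ → ℕ}

lemma psi_one : psiMap n a 1 = 0 := by unfold psiMap; simp

lemma psi_zero : psiMap n a 0 = 0 := by unfold psiMap; simp

lemma psi_val {i : ℕ} (h1 : 1 ≤ i) (h2 : i ≤ n) :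
    psiMap n a (i+1) = a i - wdes a i := by
  unfold psiMap
  rw [if_pos ⟨by omega, by omega⟩]
  simp

lemma psi_two (hn : 1 ≤ n) (hb : ∀ i, 1 ≤ i → i ≤ n → 1 ≤ a i ∧ a i ≤ i) :
    psiMap n a 2 = 1 := by
  have := psi_val (n := n) (a := a) (i := 1) le_rfl hn
  have hb1 := hb 1 le_rfl hn
  rw [wdes_one] at this
  rw [show (2:ℕ) = 1 + 1 from rfl, this]
  omega

lemma psi_step (hb : ∀ i, 1 ≤ i → i ≤ n → 1 ≤ a i ∧ a i ≤ i)
    (hav : ¬ ∃ i j k, 1 ≤ i ∧ i < j ∧ j < k ∧ k ≤ n ∧ a j ≤ a i ∧ a k ≤ a j)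
    {s : ℕ} (h1 : 2 ≤ s) (h2 : s ≤ n) :
    (a s ≤ a (s-1) → psiMap n a (s+1) < psiMap n a s) ∧
    (a (s-1) < a s → psiMap n a s < psiMap n a (s+1)) := by
  have hw1 : wdes a (s-1) ≤ a (s-1) := wdes_le hb hav (by omega)
  have hw2 : wdes a s ≤ a s := wdes_le hb hav h2
  have hsucc := wdes_succ a (show 1 ≤ s-1 by omega)
  have hss : s - 1 + 1 = s := by omega
  rw [hss] at hsucc
  have e1 : psiMap n a s = a (s-1) - wdes a (s-1) := by
    have := psi_val (n := n) (a := a) (i := s-1) (by omega) (by omega)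
    rwa [hss] at this
  have e2 : psiMap n a (s+1) = a s - wdes a s := psi_val (by omega) h2
  by_cases hc : a s ≤ a (s-1)
  · rw [if_pos hc] at hsucc
    constructor <;> intro <;> omega
  · rw [if_neg hc] at hsucc
    constructor <;> intro <;> omega

lemma psi_prim (hn : 1 ≤ n) (hb : ∀ i, 1 ≤ i → i ≤ n → 1 ≤ a i ∧ a i ≤ i)
    (hav : ¬ ∃ i j k, 1 ≤ i ∧ i < j ∧ j < k ∧ k ≤ n ∧ a j ≤ a i ∧ a k ≤ a j) :
    Primitive (psiMap n a) (n+1) := by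
  intro s hs1 hs2
  rcases Nat.eq_or_lt_of_le hs1 with h | h
  · rw [← h, psi_one, show (1:ℕ) + 1 = 2 from rfl, psi_two hn hb]
    omega
  · have := psi_step hb hav (show 2 ≤ s by omega) (by omega)
    rcases le_or_gt (a s) (a (s-1)) with hc | hc
    · exact Nat.ne_of_gt (this.1 hc)
    · exact Nat.ne_of_lt (this.2 hc)

lemma psi_des (hb : ∀ i, 1 ≤ i → i ≤ n → 1 ≤ a i ∧ a i ≤ i)
    (hav : ¬ ∃ i j k, 1 ≤ i ∧ i < j ∧ j < k ∧ k ≤ n ∧ a j ≤ a i ∧ a k ≤ a j) :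
    ∀ i, i ≤ n → des (psiMap n a) i = wdes a i := by
  intro i
  induction i with
  | zero => intro _; rw [des_zero, wdes_zero]
  | succ m ih =>
    intro hm
    rcases Nat.eq_zero_or_pos m with h0 | h0
    · subst h0
      rw [des_succ, des_zero, wdes_one]
      have h1 : psiMap n a (0+1) = 0 := psi_one
      rw [if_neg (by omega)]
    · rw [des_succ, wdes_succ a h0, ih (by omega)]
      have hstep := psi_step hb hav (show 2 ≤ m + 1 by omega) hm
      have hms : m + 1 - 1 = m := by omega
      rw [hms] at hstep
      by_cases hc : a (m+1) ≤ a m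
      · have := hstep.1 hc
        rw [if_pos hc, if_pos (by omega : psiMap n a (m+1+1) < psiMap n a (m+1))]
      · have := hstep.2 (by omega)
        rw [if_neg hc, if_neg (by omega : ¬ psiMap n a (m+1+1) < psiMap n a (m+1))]

lemma psi_asc (hn : 1 ≤ n) (hb : ∀ i, 1 ≤ i → i ≤ n → 1 ≤ a i ∧ a i ≤ i)
    (hav : ¬ ∃ i j k, 1 ≤ i ∧ i < j ∧ j < k ∧ k ≤ n ∧ a j ≤ a i ∧ a k ≤ a j) :
    AscentSeq (psiMap n a) (n+1) := by
  refine ⟨psi_one, fun i hi2 hin => ?_⟩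
  have ht : 1 ≤ i - 1 ∧ i - 1 ≤ n := by omega
  have h'' : i - 1 + 1 = i := by omega
  have hval : psiMap n a i = a (i-1) - wdes a (i-1) := by
    have := psi_val (n := n) (a := a) (i := i-1) ht.1 ht.2
    rwa [h''] at this
  have hd := psi_des hb hav (i-1) ht.2
  have hsum := asc_add_des (psi_prim hn hb hav) ht.2
  have hmono := asc_succ (psiMap n a) ht.1
  have hbb := hb (i-1) ht.1 ht.2
  rw [h''] at hsum hmono
  rw [hval]
  split_ifs at hmono <;> omega

lemma psi_supp : ∀ i, i = 0 ∨ n + 1 < i → psiMap n a i = 0 := by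
  intro i hi
  unfold psiMap
  rw [if_neg (by omega)]

lemma psi_avoid (hn : 1 ≤ n) (hb : ∀ i, 1 ≤ i → i ≤ n → 1 ≤ a i ∧ a i ≤ i)
    (hav : ¬ ∃ i j k, 1 ≤ i ∧ i < j ∧ j < k ∧ k ≤ n ∧ a j ≤ a i ∧ a k ≤ a j) :
    Avoids210 (psiMap n a) (n+1) := by
  rintro ⟨i, j, k, h1, hij, hjk, hkn, hd1, hd2⟩
  have hi2 : 2 ≤ i := by
    by_contra hcon
    have hone : i = 1 := by omega
    rw [hone, psi_one] at hd1
    omega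
  have hpat : ∃ p q r, 1 ≤ p ∧ p < q ∧ q < r ∧ r ≤ n ∧
      psiMap n a (q+1) < psiMap n a (p+1) ∧ psiMap n a (r+1) < psiMap n a (q+1) := by
    refine ⟨i-1, j-1, k-1, by omega, by omega, by omega, by omega, ?_, ?_⟩
    · have e1 : i - 1 + 1 = i := by omega
      have e2 : j - 1 + 1 = j := by omega
      rw [e1, e2]; exact hd1
    · have e2 : j - 1 + 1 = j := by omega
      have e3 : k - 1 + 1 = k := by omega
      rw [e2, e3]; exact hd2
  obtain ⟨i', j', k', h1', h2', h3', h4', h5', h6'⟩ := hard210 hpat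
  have hr : ∀ t, 1 ≤ t → t ≤ n → a t = psiMap n a (t+1) + wdes a t := by
    intro t u1 u2
    have hv := psi_val (n := n) (a := a) (i := t) u1 u2
    have hl := wdes_le hb hav u2
    omega
  have r1 := hr i' h1' (by omega)
  have r2 := hr j' (by omega) (by omega)
  have r3 := hr k' (by omega) h4'
  have d1 := psi_des hb hav i' (by omega)
  have d2 := psi_des hb hav j' (by omega)
  have d3 := psi_des hb hav k' h4'
  exact hav ⟨i', j', k', h1', h2', h3', h4', by omega, by omega⟩

lemma phi_psi_inv (hn : 1 ≤ n) (hsupp : ∀ i, i = 0 ∨ n < i → a i = 0)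
    (hb : ∀ i, 1 ≤ i → i ≤ n → 1 ≤ a i ∧ a i ≤ i)
    (hav : ¬ ∃ i j k, 1 ≤ i ∧ i < j ∧ j < k ∧ k ≤ n ∧ a j ≤ a i ∧ a k ≤ a j) :
    phiMap n (psiMap n a) = a := by
  funext j
  unfold phiMap
  by_cases hj : 1 ≤ j ∧ j ≤ n
  · rw [if_pos hj]
    have hval := psi_val (n := n) (a := a) (i := j) hj.1 hj.2
    have hd := psi_des hb hav j hj.2
    have hle := wdes_le hb hav hj.2
    omega
  · rw [if_neg hj]
    exact (hsupp j (by omega)).symm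

end PsiSide

/-- The bijection `φ` of Theorems 3.2/3.4/3.5: for `n ≥ 1`, 210-avoiding primitive ascent
sequences of length `n+1` are equinumerous with sequences `(a 1, …, a n)` with `1 ≤ a i ≤ i`
and no indices `i < j < k` with `a i ≥ a j ≥ a k`.  A sequence of length `m` is encoded as a
function `ℕ → ℕ` supported on positions `1, …, m`. -/
theorem stmt8 (n : ℕ) (hn : 1 ≤ n) :
    {x : ℕ → ℕ | (∀ i, i = 0 ∨ n + 1 < i → x i = 0) ∧
      AscentSeq x (n + 1) ∧ Avoids210 x (n + 1) ∧ Primitive x (n + 1)}.ncard =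
    {a : ℕ → ℕ | (∀ i, i = 0 ∨ n < i → a i = 0) ∧
      (∀ i, 1 ≤ i → i ≤ n → 1 ≤ a i ∧ a i ≤ i) ∧
      ¬ ∃ i j k, 1 ≤ i ∧ i < j ∧ j < k ∧ k ≤ n ∧ a j ≤ a i ∧ a k ≤ a j}.ncard := by
  classical
  set S := {x : ℕ → ℕ | (∀ i, i = 0 ∨ n + 1 < i → x i = 0) ∧
      AscentSeq x (n + 1) ∧ Avoids210 x (n + 1) ∧ Primitive x (n + 1)} with hS
  set T := {a : ℕ → ℕ | (∀ i, i = 0 ∨ n < i → a i = 0) ∧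
      (∀ i, 1 ≤ i → i ≤ n → 1 ≤ a i ∧ a i ≤ i) ∧
      ¬ ∃ i j k, 1 ≤ i ∧ i < j ∧ j < k ∧ k ≤ n ∧ a j ≤ a i ∧ a k ≤ a j} with hT
  have himg : phiMap n '' S = T := by
    ext a
    constructor
    · rintro ⟨x, hx, rfl⟩
      obtain ⟨hsupp, hasc, hav210, hprim⟩ := hx
      refine ⟨?_, ?_, ?_⟩
      · intro i hi
        unfold phiMap
        rw [if_neg (by omega)]
      · intro i h1 h2
        have e : phiMap n x i = x (i+1) + des x i := by
          unfold phiMap; rw [if_pos ⟨h1, h2⟩]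
        rw [e]
        refine ⟨one_le_phi hprim h1 h2, ?_⟩
        have h3 := x_le_asc hasc hprim h1 h2
        have h4 := asc_add_des hprim h2
        omega
      · rintro ⟨i, j, k, h1, hij, hjk, hkn, hd1, hd2⟩
        have ei : phiMap n x i = x (i+1) + des x i := by
          unfold phiMap; rw [if_pos ⟨h1, by omega⟩]
        have ej : phiMap n x j = x (j+1) + des x j := by
          unfold phiMap; rw [if_pos ⟨by omega, by omega⟩]
        have ek : phiMap n x k = x (k+1) + des x k := by
          unfold phiMap; rw [if_pos ⟨by omega, hkn⟩]
        have w1 : x (j+1) < x (i+1) := by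
          by_contra hcon
          push_neg at hcon
          have := phi_lt hprim h1 hij (by omega) hcon
          omega
        have w2 : x (k+1) < x (j+1) := by
          by_contra hcon
          push_neg at hcon
          have := phi_lt hprim (by omega) hjk hkn hcon
          omega
        exact hav210 ⟨i+1, j+1, k+1, by omega, by omega, by omega, by omega, w1, w2⟩
    · intro ha
      obtain ⟨hsupp, hb, hav⟩ := ha
      exact ⟨psiMap n a, ⟨psi_supp, psi_asc hn hb hav, psi_avoid hn hb hav,
        psi_prim hn hb hav⟩, phi_psi_inv hn hsupp hb hav⟩
  have hinj : Set.InjOn (phiMap n) S := by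
    intro x hx y hy he
    obtain ⟨hsx, hax, _, hpx⟩ := hx
    obtain ⟨hsy, hay, _, hpy⟩ := hy
    rw [← psi_phi hax hpx hsx, he, psi_phi hay hpy hsy]
  rw [← himg]
  exact (Set.ncard_image_of_injOn hinj).symm
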